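/- Let Q be a Poincaré duality CDGA in dimension n − 2k (with k ≥ 1), and let e ∈ Q^{2k} be a cocycle (d(e) = 0). Let z̄ be a generator of even degree 2k and define P := (Q ⊗ Λz̄)/(z̄² − e·z̄) with differential extending d_Q and D(z̄) = 0 (this is well defined since d(z̄² − e z̄) lies in the ideal (z̄² − e z̄)). Then P is a Poincaré duality CDGA in dimension n; as graded vector spaces P ≅ Q ⊕ z̄·Q. -/

import Mathlib

/-!
Common framework: commutative differential graded algebras (CDGAs) over `ℚ`,
differential graded modules, linear duals (represented via perfect pairings),
mapping cones with their semi-trivial multiplication, Poincaré duality CDGAs,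
orientations, orphans, and Sullivan extensions.

A CDGA over `ℚ` is presented as a (possibly non-commutative) ring `A` which is a
`ℚ`-algebra, together with an internal `ℕ`-grading by `ℚ`-subspaces for which
`A` is the internal direct sum of the pieces, such that the product is graded
(with graded commutativity `a·b = (-1)^{|a||b|} b·a`), and a degree `+1`
`ℚ`-linear differential squaring to zero and satisfying the Leibniz rule.
-/

noncomputable section

structure CDGAStruct (A : Type) [Ring A] [Algebra ℚ A] : Type where
  gr : ℕ → Submodule ℚ A
  internal : DirectSum.IsInternal gr
  one_mem : (1 : A) ∈ gr 0
  mul_mem : ∀ {i j : ℕ} {a b : A}, a ∈ gr i → b ∈ gr j → a * b ∈ gr (i + j)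
  gcomm : ∀ {i j : ℕ} {a b : A}, a ∈ gr i → b ∈ gr j →
    a * b = ((-1 : ℚ) ^ (i * j)) • (b * a)
  d : A →ₗ[ℚ] A
  d_mem : ∀ {i : ℕ} {a : A}, a ∈ gr i → d a ∈ gr (i + 1)
  d_sq : ∀ a : A, d (d a) = 0
  leibniz : ∀ {i : ℕ} (a b : A), a ∈ gr i →
    d (a * b) = d a * b + ((-1 : ℚ) ^ i) • (a * d b)

namespace CDGAStruct

variable {A : Type} [Ring A] [Algebra ℚ A]

/-- The grading of a CDGA extended to `ℤ` (zero in negative degrees). -/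
def grZ (SA : CDGAStruct A) : ℤ → Submodule ℚ A :=
  fun j => if 0 ≤ j then SA.gr j.toNat else ⊥

/-- A CDGA is connected if `A⁰ = ℚ·1 ≅ ℚ`. -/
def Connected (SA : CDGAStruct A) : Prop :=
  ∀ a ∈ SA.gr 0, ∃! q : ℚ, a = q • (1 : A)

/-- A CDGA is of finite type if each graded piece is finite dimensional. -/
def FiniteType (SA : CDGAStruct A) : Prop :=
  ∀ i : ℕ, FiniteDimensional ℚ (SA.gr i)

end CDGAStruct

/-- A morphism of CDGAs: a `ℚ`-linear map which is unital, multiplicative,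
preserves the gradings and commutes with the differentials. -/
def IsCDGAHom {A B : Type} [Ring A] [Algebra ℚ A] [Ring B] [Algebra ℚ B]
    (SA : CDGAStruct A) (SB : CDGAStruct B) (f : A →ₗ[ℚ] B) : Prop :=
  f 1 = 1 ∧ (∀ a a' : A, f (a * a') = f a * f a') ∧
    (∀ i : ℕ, ∀ a ∈ SA.gr i, f a ∈ SB.gr i) ∧ ∀ a, f (SA.d a) = SB.d (f a)

/-- A differential graded module (`ℤ`-graded) over the CDGA `(A, SA)`. -/
structure DGModStruct {A : Type} [Ring A] [Algebra ℚ A] (SA : CDGAStruct A)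
    (M : Type) [AddCommGroup M] [Module ℚ M] : Type where
  gr : ℤ → Submodule ℚ M
  internal : DirectSum.IsInternal gr
  smul : A →ₗ[ℚ] M →ₗ[ℚ] M
  one_smul : ∀ m : M, smul 1 m = m
  mul_smul : ∀ (a b : A) (m : M), smul (a * b) m = smul a (smul b m)
  smul_mem : ∀ {i : ℕ} {j : ℤ} {a : A} {m : M},
    a ∈ SA.gr i → m ∈ gr j → smul a m ∈ gr (i + j)
  d : M →ₗ[ℚ] M
  d_mem : ∀ {j : ℤ} {m : M}, m ∈ gr j → d m ∈ gr (j + 1)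
  d_sq : ∀ m : M, d (d m) = 0
  leibniz : ∀ {i : ℕ} (a : A) (m : M), a ∈ SA.gr i →
    d (smul a m) = smul (SA.d a) m + ((-1 : ℚ) ^ i) • smul a (d m)

/-- `SM` is the tautological dg-module structure of a CDGA over itself. -/
def IsSelfMod {A : Type} [Ring A] [Algebra ℚ A] (SA : CDGAStruct A)
    (SM : DGModStruct SA A) : Prop :=
  (∀ j : ℤ, SM.gr j = SA.grZ j) ∧ (∀ a b : A, SM.smul a b = a * b) ∧
    ∀ a : A, SM.d a = SA.d a

/-- `SMA` is the `A`-dg-module structure induced from the `B`-dg-module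
structure `SMB` by restriction along the CDGA morphism `φ : A → B`. -/
def IsModViaHom {A B : Type} [Ring A] [Algebra ℚ A] [Ring B] [Algebra ℚ B]
    (SA : CDGAStruct A) (SB : CDGAStruct B) (φ : A →ₗ[ℚ] B)
    {M : Type} [AddCommGroup M] [Module ℚ M]
    (SMB : DGModStruct SB M) (SMA : DGModStruct SA M) : Prop :=
  (∀ j : ℤ, SMA.gr j = SMB.gr j) ∧ (∀ (a : A) (m : M), SMA.smul a m = SMB.smul (φ a) m) ∧
    ∀ m : M, SMA.d m = SMB.d m

/-- A (degree `0`) morphism of dg-modules over a fixed CDGA. -/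
def IsDGModHom {A : Type} [Ring A] [Algebra ℚ A] {SA : CDGAStruct A}
    {M N : Type} [AddCommGroup M] [Module ℚ M] [AddCommGroup N] [Module ℚ N]
    (SM : DGModStruct SA M) (SN : DGModStruct SA N) (f : M →ₗ[ℚ] N) : Prop :=
  (∀ j : ℤ, ∀ m ∈ SM.gr j, f m ∈ SN.gr j) ∧
    (∀ (a : A) (m : M), f (SM.smul a m) = SN.smul a (f m)) ∧
    ∀ m : M, f (SM.d m) = SN.d (f m)

/-- A (degree `0`) morphism of `A`-dg-modules with target the CDGA `A` itself. -/
def IsDGHomToAlg {A : Type} [Ring A] [Algebra ℚ A] (SA : CDGAStruct A)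
    {M : Type} [AddCommGroup M] [Module ℚ M]
    (SM : DGModStruct SA M) (f : M →ₗ[ℚ] A) : Prop :=
  (∀ j : ℤ, ∀ m ∈ SM.gr j, f m ∈ SA.grZ j) ∧
    (∀ (a : A) (m : M), f (SM.smul a m) = a * f m) ∧
    ∀ m : M, f (SM.d m) = SA.d (f m)

/-- An `A`-dg-module morphism `f : M → A` is balanced when `f(x)·y = x·f(y)`
for all `x, y ∈ M`; here `x·f(y) = (-1)^{|x||f(y)|} f(y)·x` by the usual Koszul
sign rule, and `|f(y)| = |y|` since `f` has degree `0`. -/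
def IsBalanced {A : Type} [Ring A] [Algebra ℚ A] (SA : CDGAStruct A)
    {M : Type} [AddCommGroup M] [Module ℚ M]
    (SM : DGModStruct SA M) (f : M →ₗ[ℚ] A) : Prop :=
  ∀ (i j : ℤ) (x y : M), x ∈ SM.gr i → y ∈ SM.gr j →
    SM.smul (f x) y = ((-1 : ℚ) ^ (i * j)) • SM.smul (f y) x

/-- `SD` realizes the shifted linear dual `s^{-n}#M` of the `A`-dg-module `M`:
the structure carries a pairing `⟨-,-⟩ : D ⊗ M → ℚ` which vanishes except
between degrees `p` and `n - p`, is perfect in each degree, and satisfies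
`⟨d f, x⟩ = -(-1)^{|f|} ⟨f, d x⟩` and `⟨a·f, x⟩ = (-1)^{|a||f|} ⟨f, a·x⟩`
(the standard dual dg-module structure `(a·f)(x) = (-1)^{|a||f|} f(a·x)` with
the dual differential). -/
structure DualRep {A : Type} [Ring A] [Algebra ℚ A] (SA : CDGAStruct A)
    {M : Type} [AddCommGroup M] [Module ℚ M] (SM : DGModStruct SA M) (n : ℤ)
    {D : Type} [AddCommGroup D] [Module ℚ D] (SD : DGModStruct SA D) : Type where
  pair : D →ₗ[ℚ] M →ₗ[ℚ] ℚ
  pair_deg : ∀ {p q : ℤ} {f : D} {x : M}, f ∈ SD.gr p → x ∈ SM.gr q →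
    p + q ≠ n → pair f x = 0
  nondeg : ∀ {p : ℤ} (f : D), f ∈ SD.gr p → (∀ x ∈ SM.gr (n - p), pair f x = 0) → f = 0
  surj : ∀ (p : ℤ) (φ : M →ₗ[ℚ] ℚ), ∃ f ∈ SD.gr p, ∀ x ∈ SM.gr (n - p), pair f x = φ x
  d_pair : ∀ {p : ℤ} (f : D) (x : M), f ∈ SD.gr p →
    pair (SD.d f) x = -(((-1 : ℚ) ^ p) * pair f (SM.d x))
  smul_pair : ∀ {i : ℕ} {p : ℤ} (a : A) (f : D) (x : M), a ∈ SA.gr i → f ∈ SD.gr p →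
    pair (SD.smul a f) x = ((-1 : ℚ) ^ ((i : ℤ) * p)) * pair f (SM.smul a x)

/-- A bundled dg-module over the CDGA `(A, SA)`. -/
structure DGMod {A : Type} [Ring A] [Algebra ℚ A] (SA : CDGAStruct A) : Type 1 where
  carrier : Type
  [acg : AddCommGroup carrier]
  [mod : Module ℚ carrier]
  str : DGModStruct SA carrier

attribute [instance] DGMod.acg DGMod.mod

/-- `SA` is a Poincaré duality CDGA in dimension `n`: it is connected, of finite
type, and there is an isomorphism of `A`-dg-modules `θ : A ≅ s^{-n}#A`. -/
def IsPDCDGA {A : Type} [Ring A] [Algebra ℚ A] (SA : CDGAStruct A) (n : ℤ) : Prop :=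
  SA.Connected ∧ SA.FiniteType ∧
    ∃ SAm : DGModStruct SA A, IsSelfMod SA SAm ∧
      ∃ (DM : DGMod SA) (_ : DualRep SA SAm n DM.str) (θ : A →ₗ[ℚ] DM.carrier),
        IsDGModHom SAm DM.str θ ∧ Function.Bijective θ

section Cohomology

variable {M N : Type} [AddCommGroup M] [Module ℚ M] [AddCommGroup N] [Module ℚ N]

def IsCocycle (gr : ℤ → Submodule ℚ M) (d : M →ₗ[ℚ] M) (j : ℤ) (x : M) : Prop :=
  x ∈ gr j ∧ d x = 0

def IsCoboundary (gr : ℤ → Submodule ℚ M) (d : M →ₗ[ℚ] M) (j : ℤ) (x : M) : Prop :=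
  ∃ y ∈ gr (j - 1), d y = x

/-- `H^j` vanishes: every cocycle of degree `j` is a coboundary. -/
def CohVanishAt (gr : ℤ → Submodule ℚ M) (d : M →ₗ[ℚ] M) (j : ℤ) : Prop :=
  ∀ x, IsCocycle gr d j x → IsCoboundary gr d j x

/-- The chain map `f` induces an isomorphism `H^j(M) → H^j(N)` (surjectivity
and injectivity on cohomology classes in degree `j`). -/
def CohomIsoAt (grM : ℤ → Submodule ℚ M) (dM : M →ₗ[ℚ] M)
    (grN : ℤ → Submodule ℚ N) (dN : N →ₗ[ℚ] N) (f : M →ₗ[ℚ] N) (j : ℤ) : Prop :=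
  (∀ y, IsCocycle grN dN j y →
    ∃ x, IsCocycle grM dM j x ∧ IsCoboundary grN dN j (f x - y)) ∧
  ∀ x, IsCocycle grM dM j x → IsCoboundary grN dN j (f x) → IsCoboundary grM dM j x

def IsQuasiIsoGr (grM : ℤ → Submodule ℚ M) (dM : M →ₗ[ℚ] M)
    (grN : ℤ → Submodule ℚ N) (dN : N →ₗ[ℚ] N) (f : M →ₗ[ℚ] N) : Prop :=
  ∀ j : ℤ, CohomIsoAt grM dM grN dN f j

/-- The degree-`j` cohomology of a graded cochain complex, as a `ℚ`-module. -/
abbrev cohomologyAt (gr : ℤ → Submodule ℚ M) (d : M →ₗ[ℚ] M) (j : ℤ) : Type :=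
  ↥(gr j ⊓ LinearMap.ker d) ⧸
    Submodule.comap (gr j ⊓ LinearMap.ker d).subtype (LinearMap.range d)

end Cohomology

/-- A quasi-isomorphism of CDGAs (on underlying linear maps). -/
def IsQuasiIsoCDGA {A B : Type} [Ring A] [Algebra ℚ A] [Ring B] [Algebra ℚ B]
    (SA : CDGAStruct A) (SB : CDGAStruct B) (f : A →ₗ[ℚ] B) : Prop :=
  IsQuasiIsoGr SA.grZ SA.d SB.grZ SB.d f

/-- `H(A)` is a Poincaré duality algebra in dimension `n`: `H⁰ = ℚ`,
`H^{>n} = 0`, `dim H^n = 1` and the multiplication pairing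
`H^k ⊗ H^{n-k} → H^n ≅ ℚ` is non-degenerate (expressed elementwise via a
linear functional `ε` representing evaluation against the fundamental class). -/
def CohomologyPD {A : Type} [Ring A] [Algebra ℚ A] (SA : CDGAStruct A) (n : ℕ) : Prop :=
  (∀ a ∈ SA.gr 0, SA.d a = 0 → ∃ q : ℚ, a = q • (1 : A)) ∧
  (∀ j : ℤ, (n : ℤ) < j → CohVanishAt SA.grZ SA.d j) ∧
  ∃ ε : A →ₗ[ℚ] ℚ,
    (∀ i : ℕ, i ≠ n → ∀ a ∈ SA.gr i, ε a = 0) ∧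
    (∀ a : A, ε (SA.d a) = 0) ∧
    (∃ a ∈ SA.gr n, SA.d a = 0 ∧ ε a = 1) ∧
    (∀ a ∈ SA.gr n, SA.d a = 0 → ε a = 0 → IsCoboundary SA.grZ SA.d (n : ℤ) a) ∧
    ∀ i : ℕ, i ≤ n → ∀ a ∈ SA.gr i, SA.d a = 0 →
      ¬ IsCoboundary SA.grZ SA.d (i : ℤ) a →
        ∃ b ∈ SA.gr (n - i), SA.d b = 0 ∧ ε (a * b) ≠ 0

/-- `H(A)` is `1`-connected: `H⁰(A) = ℚ` and `H¹(A) = 0`. -/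
def CohOneConnected {A : Type} [Ring A] [Algebra ℚ A] (SA : CDGAStruct A) : Prop :=
  (∀ a ∈ SA.gr 0, SA.d a = 0 → ∃ q : ℚ, a = q • (1 : A)) ∧
  ∀ a ∈ SA.gr 1, SA.d a = 0 → ∃ b ∈ SA.gr 0, SA.d b = a

section Cone

variable {A : Type} [Ring A] [Algebra ℚ A] {M : Type} [AddCommGroup M] [Module ℚ M]

/-- The grading of the mapping cone `C(f) = A ⊕ sM` of a dg-module morphism
`f : M → A`:  `C(f)^p = A^p ⊕ (sM)^p = A^p ⊕ M^{p+1}`. -/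
def coneGr (SA : CDGAStruct A) (SM : DGModStruct SA M) : ℤ → Submodule ℚ (A × M) :=
  fun p => (SA.grZ p).prod (SM.gr (p + 1))

/-- The differential of the mapping cone `C(f) = A ⊕_f sM`:
`δ(a, sm) = (d a + f m, -s (d m))`. -/
def coneD (SA : CDGAStruct A) (SM : DGModStruct SA M) (f : M →ₗ[ℚ] A) :
    A × M →ₗ[ℚ] A × M :=
  (SA.d ∘ₗ LinearMap.fst ℚ A M + f ∘ₗ LinearMap.snd ℚ A M).prod
    (-(SM.d ∘ₗ LinearMap.snd ℚ A M))

/-- The semi-trivial product on the mapping cone `A ⊕ sM`: it is the unique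
graded-commutative product extending the product of `A` and the `A`-module
structure of `sM` (with the Koszul sign `a·(sm) = (-1)^{|a|} s(a·m)`), and with
`(sm)·(sm') = 0`. -/
def SemiTrivialMul (SA : CDGAStruct A) (SM : DGModStruct SA M)
    (μ : A × M →ₗ[ℚ] A × M →ₗ[ℚ] A × M) : Prop :=
  (∀ a a' : A, μ (a, 0) (a', 0) = (a * a', 0)) ∧
  (∀ (i : ℕ) (a : A) (m : M), a ∈ SA.gr i →
    μ (a, 0) (0, m) = (0, ((-1 : ℚ) ^ i) • SM.smul a m)) ∧
  (∀ (i : ℕ) (j : ℤ) (a : A) (m : M), a ∈ SA.gr i → m ∈ SM.gr j →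
    μ (0, m) (a, 0) = (0, ((-1 : ℚ) ^ (j * (i : ℤ))) • SM.smul a m)) ∧
  ∀ m m' : M, μ (0, m) (0, m') = 0

end Cone

/-- The data `(gr, 1, μ, d)` on `C` is a (`ℤ`-graded) CDGA: internal grading,
unital associative graded-commutative product, degree `+1` differential
squaring to zero and satisfying the Leibniz rule. -/
def IsGCDGA {C : Type} [AddCommGroup C] [Module ℚ C]
    (gr : ℤ → Submodule ℚ C) (one : C) (μ : C →ₗ[ℚ] C →ₗ[ℚ] C) (d : C →ₗ[ℚ] C) : Prop :=
  DirectSum.IsInternal gr ∧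
  one ∈ gr 0 ∧
  (∀ x, μ one x = x) ∧ (∀ x, μ x one = x) ∧
  (∀ x y z : C, μ (μ x y) z = μ x (μ y z)) ∧
  (∀ (i j : ℤ) (x y : C), x ∈ gr i → y ∈ gr j → μ x y ∈ gr (i + j)) ∧
  (∀ (i j : ℤ) (x y : C), x ∈ gr i → y ∈ gr j → μ x y = ((-1 : ℚ) ^ (i * j)) • μ y x) ∧
  (∀ j : ℤ, ∀ x ∈ gr j, d x ∈ gr (j + 1)) ∧
  (∀ x, d (d x) = 0) ∧
  ∀ (i : ℤ) (x y : C), x ∈ gr i → d (μ x y) = μ (d x) y + ((-1 : ℚ) ^ i) • μ x (d y)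

/-- A morphism of (`ℤ`-graded) differential graded algebras presented by
`(grading, unit, product, differential)` data. -/
def IsGradedDGAHom {C D : Type} [AddCommGroup C] [Module ℚ C] [AddCommGroup D] [Module ℚ D]
    (grC : ℤ → Submodule ℚ C) (oneC : C) (μC : C →ₗ[ℚ] C →ₗ[ℚ] C) (dC : C →ₗ[ℚ] C)
    (grD : ℤ → Submodule ℚ D) (oneD : D) (μD : D →ₗ[ℚ] D →ₗ[ℚ] D) (dD : D →ₗ[ℚ] D)
    (g : C →ₗ[ℚ] D) : Prop :=
  g oneC = oneD ∧ (∀ x y : C, g (μC x y) = μD (g x) (g y)) ∧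
    (∀ j : ℤ, ∀ x ∈ grC j, g x ∈ grD j) ∧ ∀ x, g (dC x) = dD (g x)

/-- An orientation in degree `n` of a CDGA: a chain map `ε : A → s^{-n}ℚ`
(i.e., `ε` is supported in degree `n` and kills boundaries) which is surjective
in cohomology. -/
def IsOrientation {A : Type} [Ring A] [Algebra ℚ A] (SA : CDGAStruct A) (n : ℕ)
    (ε : A →ₗ[ℚ] ℚ) : Prop :=
  (∀ i : ℕ, i ≠ n → ∀ a ∈ SA.gr i, ε a = 0) ∧ (∀ a : A, ε (SA.d a) = 0) ∧
    ∃ a ∈ SA.gr n, SA.d a = 0 ∧ ε a ≠ 0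

/-- The orphan ideal `O(A, ε) = {a ∈ A | ∀ b, ε(a·b) = 0}` of an oriented CDGA. -/
def orphans {A : Type} [Ring A] [Algebra ℚ A] (_SA : CDGAStruct A) (ε : A →ₗ[ℚ] ℚ) :
    Submodule ℚ A where
  carrier := { a : A | ∀ b : A, ε (a * b) = 0 }
  add_mem' := by
    intro a a' ha ha'
    intro b
    rw [add_mul, map_add, ha b, ha' b, add_zero]
  zero_mem' := by
    intro b
    rw [zero_mul, map_zero]
  smul_mem' := by
    intro c a ha
    intro b
    rw [smul_mul_assoc, map_smul, ha b, smul_zero]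

/-- The orphan ideal is acyclic: it has vanishing cohomology in all degrees. -/
def OrphansAcyclic {A : Type} [Ring A] [Algebra ℚ A] (SA : CDGAStruct A)
    (ε : A →ₗ[ℚ] ℚ) : Prop :=
  ∀ (j : ℕ) (x : A), x ∈ orphans SA ε → x ∈ SA.gr j → SA.d x = 0 →
    ∃ y ∈ orphans SA ε, y ∈ SA.gr (j - 1) ∧ SA.d y = x

/-- A (relative) Sullivan extension `(A, d) ↪ (Â = A ⊗ ΛV, d̂)`: an injective
CDGA morphism `inc : A → Â` together with a graded subspace `V ⊆ Â` of
generators such that `Â` is the free graded-commutative `A`-algebra on `V`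
(expressed by the universal property), and `V` admits an exhaustive increasing
filtration `F 0 ⊆ F 1 ⊆ ⋯` with `d̂(F (k+1)) ⊆ A ⊗ ΛF k` and `d̂(F 0) ⊆ A`. -/
structure SullivanExtension {A Ahat : Type} [Ring A] [Algebra ℚ A]
    [Ring Ahat] [Algebra ℚ Ahat]
    (SA : CDGAStruct A) (SH : CDGAStruct Ahat) : Type 1 where
  inc : A →ₗ[ℚ] Ahat
  hom : IsCDGAHom SA SH inc
  inj : Function.Injective inc
  V : ℕ → Submodule ℚ Ahat
  V_deg : ∀ i : ℕ, V i ≤ SH.gr i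
  free : ∀ (B : Type) [Ring B] [Algebra ℚ B] (SB : CDGAStruct B) (g : A →ₗ[ℚ] B),
    g 1 = 1 → (∀ a a' : A, g (a * a') = g a * g a') →
    (∀ i : ℕ, ∀ a ∈ SA.gr i, g a ∈ SB.gr i) →
    ∀ h : Ahat →ₗ[ℚ] B, (∀ i : ℕ, ∀ v ∈ V i, h v ∈ SB.gr i) →
    ∃! G : Ahat →ₗ[ℚ] B, G 1 = 1 ∧ (∀ x y : Ahat, G (x * y) = G x * G y) ∧
      (∀ i : ℕ, ∀ x ∈ SH.gr i, G x ∈ SB.gr i) ∧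
      (∀ a : A, G (inc a) = g a) ∧ ∀ i : ℕ, ∀ v ∈ V i, G v = h v
  filt : ∃ F : ℕ → Submodule ℚ Ahat,
    (∀ k : ℕ, F k ≤ F (k + 1)) ∧ (∀ k : ℕ, F k ≤ ⨆ i, V i) ∧
    ((⨆ i, V i) ≤ ⨆ k, F k) ∧
    (∀ v ∈ F 0, SH.d v ∈ Algebra.adjoin ℚ (Set.range inc)) ∧
    ∀ k : ℕ, ∀ v ∈ F (k + 1),
      SH.d v ∈ Algebra.adjoin ℚ (Set.range inc ∪ (F k : Set Ahat))

/-- A bundled CDGA over `ℚ`. -/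
structure CDGA : Type 1 where
  carrier : Type
  [ring : Ring carrier]
  [alg : Algebra ℚ carrier]
  str : CDGAStruct carrier

attribute [instance] CDGA.ring CDGA.alg

/-- A bundled morphism of CDGAs. -/
structure CDGAMor : Type 1 where
  src : CDGA
  tgt : CDGA
  map : src.carrier →ₗ[ℚ] tgt.carrier
  isHom : IsCDGAHom src.str tgt.str map

/-- One step of weak equivalence between CDGA morphisms: a commutative square
whose horizontal maps are quasi-isomorphisms of CDGAs. -/
def MorWeakEqStep (m m' : CDGAMor) : Prop :=
  ∃ (α : m.src.carrier →ₗ[ℚ] m'.src.carrier) (β : m.tgt.carrier →ₗ[ℚ] m'.tgt.carrier),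
    IsCDGAHom m.src.str m'.src.str α ∧ IsQuasiIsoCDGA m.src.str m'.src.str α ∧
    IsCDGAHom m.tgt.str m'.tgt.str β ∧ IsQuasiIsoCDGA m.tgt.str m'.tgt.str β ∧
    β ∘ₗ m.map = m'.map ∘ₗ α

/-- Two CDGA morphisms are weakly equivalent if they are connected by a finite
zigzag of commutative squares whose horizontal maps are quasi-isomorphisms. -/
def MorWeakEq : CDGAMor → CDGAMor → Prop := Relation.EqvGen MorWeakEqStep

/-- Two CDGAs are weakly equivalent if they are connected by a finite zigzag of
quasi-isomorphisms of CDGAs. -/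
def CDGAWeakEq : CDGA → CDGA → Prop :=
  Relation.EqvGen fun X Y =>
    ∃ f : X.carrier →ₗ[ℚ] Y.carrier, IsCDGAHom X.str Y.str f ∧ IsQuasiIsoCDGA X.str Y.str f

end

/-! ### Auxiliary material for Statement 7 -/

section Statement7Aux

open DirectSum

variable {M N : Type} [AddCommGroup M] [Module ℚ M] [AddCommGroup N] [Module ℚ N]

/-- Components of an internal decomposition: if `f` is injective, grading-preserving,
and `f x` is homogeneous of degree `p`, then `x` is homogeneous of degree `p`. -/
theorem s7_homog_of_map_homog {grM : ℤ → Submodule ℚ M} {grN : ℤ → Submodule ℚ N}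
    (hM : DirectSum.IsInternal grM) (hN : DirectSum.IsInternal grN)
    (f : M →ₗ[ℚ] N) (hf : ∀ j : ℤ, ∀ m ∈ grM j, f m ∈ grN j)
    (hinj : Function.Injective f) {p : ℤ} {x : M} (hx : f x ∈ grN p) : x ∈ grM p := by
  classical
  set Φ : (⨁ j, grM j) →ₗ[ℚ] ⨁ j, grN j :=
    DirectSum.toModule ℚ ℤ _ (fun j => (DirectSum.lof ℚ ℤ (fun j => ↥(grN j)) j).comp
      ((f.domRestrict (grM j)).codRestrict (grN j) (fun m => hf j m.1 m.2))) with hΦ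
  have hcomm : ∀ u : ⨁ j, grM j,
      DirectSum.coeLinearMap grN (Φ u) = f (DirectSum.coeLinearMap grM u) := by
    intro u
    have : (DirectSum.coeLinearMap grN).comp Φ =
        f.comp (DirectSum.coeLinearMap grM) := by
      refine DirectSum.linearMap_ext _ fun i => ?_
      ext x
      simp only [LinearMap.comp_apply]
      rw [hΦ, DirectSum.toModule_lof, LinearMap.comp_apply, DirectSum.lof_eq_of,
        DirectSum.lof_eq_of, DirectSum.coeLinearMap_of, DirectSum.coeLinearMap_of]
      rfl
    exact congrArg (fun g => g u) this
  have hcomp : ∀ (u : ⨁ j, grM j) (j : ℤ), ((Φ u) j : N) = f (u j) := by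
    intro u
    induction u using DirectSum.induction_on with
    | zero => intro j; simp
    | of i m =>
      intro j
      have hof : Φ (DirectSum.of _ i m) =
          DirectSum.of (fun j => ↥(grN j)) i ⟨f m, hf i m.1 m.2⟩ := by
        rw [← DirectSum.lof_eq_of ℚ, hΦ, DirectSum.toModule_lof]
        rw [LinearMap.comp_apply, DirectSum.lof_eq_of]
        rfl
      rw [hof]
      by_cases h : i = j
      · subst h
        rw [DirectSum.of_eq_same, DirectSum.of_eq_same]
      · rw [DirectSum.of_eq_of_ne _ _ _ (Ne.symm h), DirectSum.of_eq_of_ne _ _ _ (Ne.symm h)]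
        simp
    | add u v hu hv =>
      intro j
      rw [map_add]
      simp only [DirectSum.add_apply, Submodule.coe_add, hu j, hv j, map_add]
  obtain ⟨u, hu⟩ := hM.surjective x
  have hu' : DirectSum.coeLinearMap grM u = x := hu
  set v : ⨁ j, grN j := DirectSum.of (fun j => ↥(grN j)) p ⟨f x, hx⟩ with hv
  have hvc : DirectSum.coeLinearMap grN v = f x := DirectSum.coeLinearMap_of _ _ _
  have hΦu : Φ u = v := by
    apply hN.injective
    show DirectSum.coeLinearMap grN (Φ u) = DirectSum.coeLinearMap grN v
    rw [hcomm, hu', hvc]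
  have hzero : ∀ j : ℤ, j ≠ p → (u j : M) = 0 := by
    intro j hj
    have h1 : f (u j) = ((Φ u) j : N) := (hcomp u j).symm
    rw [hΦu, hv, DirectSum.of_eq_of_ne _ _ _ hj] at h1
    have : f (u j) = f 0 := by simpa using h1
    exact hinj this
  have : u = DirectSum.of (fun j => ↥(grM j)) p (u p) := by
    apply DFinsupp.ext
    intro j
    by_cases h : j = p
    · subst h; rw [DirectSum.of_eq_same]
    · rw [DirectSum.of_eq_of_ne _ _ _ h]
      exact Subtype.ext (hzero j h)
  rw [this] at hu'
  rw [DirectSum.coeLinearMap_of] at hu'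
  rw [← hu']
  exact (u p).2

/-- Extending an `ℕ`-indexed internal grading by `⊥` in negative degrees. -/
theorem s7_internal_ext {gr : ℕ → Submodule ℚ M} (h : DirectSum.IsInternal gr) :
    DirectSum.IsInternal (fun j : ℤ => if 0 ≤ j then gr j.toNat else ⊥) := by
  rw [DirectSum.isInternal_submodule_iff_iSupIndep_and_iSup_eq_top]
  obtain ⟨hind, hsup⟩ :=
    (DirectSum.isInternal_submodule_iff_iSupIndep_and_iSup_eq_top gr).mp h
  constructor
  · intro j
    by_cases hj : 0 ≤ j
    · simp only [hj, if_pos]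
      have : (⨆ (j' : ℤ) (_ : j' ≠ j), if 0 ≤ j' then gr j'.toNat else ⊥) ≤
          ⨆ (i : ℕ) (_ : i ≠ j.toNat), gr i := by
        apply iSup_le; intro j'; apply iSup_le; intro hj'
        by_cases h0 : 0 ≤ j'
        · simp only [h0, if_pos]
          have : j'.toNat ≠ j.toNat := by omega
          exact le_iSup_of_le j'.toNat (le_iSup_of_le this le_rfl)
        · simp [h0]
      exact (hind j.toNat).mono_right this
    · simp [hj]
  · rw [eq_top_iff, ← hsup]
    apply iSup_le; intro i
    refine le_iSup_of_le (i : ℤ) ?_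
    simp

/-- Induction over an internal `ℕ`-grading. -/
theorem s7_graded_induction {gr : ℕ → Submodule ℚ M} (h : DirectSum.IsInternal gr)
    (C : M → Prop) (h0 : C 0) (hadd : ∀ x y, C x → C y → C (x + y))
    (hgr : ∀ i : ℕ, ∀ x ∈ gr i, C x) (a : M) : C a := by
  have ha : a ∈ ⨆ i, gr i := by rw [h.submodule_iSup_eq_top]; trivial
  exact Submodule.iSup_induction (motive := C) _ ha hgr h0 hadd

namespace CDGAStruct

variable {A : Type} [Ring A] [Algebra ℚ A] (SA : CDGAStruct A)

theorem s7_grZ_neg {j : ℤ} (hj : j < 0) : SA.grZ j = ⊥ := by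
  simp [CDGAStruct.grZ, not_le.mpr hj]

theorem s7_grZ_nonneg {j : ℤ} (hj : 0 ≤ j) : SA.grZ j = SA.gr j.toNat := by
  simp [CDGAStruct.grZ, hj]

theorem s7_mem_grZ {i : ℕ} {j : ℤ} {a : A} (h : a ∈ SA.gr i) (hj : j = (i : ℤ)) :
    a ∈ SA.grZ j := by
  subst hj
  rw [SA.s7_grZ_nonneg (Int.natCast_nonneg i)]
  simpa using h

theorem s7_grZ_zero_mem {j : ℤ} {a : A} (h : a = 0) : a ∈ SA.grZ j := by
  subst h; exact zero_mem _

theorem s7_grZ_eq_zero {j : ℤ} (hj : j < 0) {a : A} (h : a ∈ SA.grZ j) : a = 0 := by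
  rw [SA.s7_grZ_neg hj] at h
  simpa using h

theorem s7_grZ_internal : DirectSum.IsInternal SA.grZ := s7_internal_ext SA.internal

/-- The tautological dg-module structure of a CDGA over itself. -/
def s7_selfMod : DGModStruct SA A where
  gr := SA.grZ
  internal := SA.s7_grZ_internal
  smul := LinearMap.mul ℚ A
  one_smul := fun m => one_mul m
  mul_smul := fun a b m => mul_assoc a b m
  smul_mem := by
    intro i j a m ha hm
    by_cases hj : 0 ≤ j
    · rw [SA.s7_grZ_nonneg hj] at hm
      have hmem := SA.mul_mem ha hm
      show a * m ∈ SA.grZ ((i : ℤ) + j)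
      exact SA.s7_mem_grZ hmem (by omega)
    · have : m = 0 := SA.s7_grZ_eq_zero (by omega) hm
      show a * m ∈ SA.grZ ((i : ℤ) + j)
      rw [this, mul_zero]
      exact zero_mem _
  d := SA.d
  d_mem := by
    intro j m hm
    by_cases hj : 0 ≤ j
    · rw [SA.s7_grZ_nonneg hj] at hm
      exact SA.s7_mem_grZ (SA.d_mem hm) (by omega)
    · have : m = 0 := SA.s7_grZ_eq_zero (by omega) hm
      rw [this, map_zero]
      exact zero_mem _
  d_sq := SA.d_sq
  leibniz := fun a m ha => SA.leibniz a m ha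

theorem s7_selfMod_isSelf : IsSelfMod SA SA.s7_selfMod :=
  ⟨fun _ => rfl, fun _ _ => rfl, fun _ => rfl⟩

end CDGAStruct

end Statement7Aux

/-- Let `Q` be a Poincaré duality CDGA in dimension `n - 2k`
(with `k ≥ 1`), and let `e ∈ Q^{2k}` be a cocycle. Let `z̄` be a generator of
even degree `2k` and define `P := (Q ⊗ Λz̄)/(z̄² - e·z̄)` with differential
extending `d_Q` and `D(z̄) = 0`. Then `P` is a Poincaré duality CDGA in
dimension `n`; as graded vector spaces `P ≅ Q ⊕ z̄·Q`.  (The algebra `P` is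
presented abstractly: a CDGA `P` with a CDGA morphism `ι : Q → P` and an
element `z ∈ P^{2k}` with `dz = 0`, `z² = ι(e)·z`, such that every element of
`P` is uniquely `ι(q₁) + ι(q₂)·z`, compatibly with the gradings.) -/
theorem statement7 {Q P : Type} [Ring Q] [Algebra ℚ Q] [Ring P] [Algebra ℚ P]
    (SQ : CDGAStruct Q) (SP : CDGAStruct P) (n k : ℕ) (hk : 1 ≤ k)
    (hQPD : IsPDCDGA SQ ((n : ℤ) - 2 * k))
    (e : Q) (he : e ∈ SQ.gr (2 * k)) (hde : SQ.d e = 0)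
    (ι : Q →ₗ[ℚ] P) (hι : IsCDGAHom SQ SP ι)
    (z : P) (hz : z ∈ SP.gr (2 * k)) (hdz : SP.d z = 0) (hzsq : z * z = ι e * z)
    (hfree : ∀ p : P, ∃! qq : Q × Q, p = ι qq.1 + ι qq.2 * z)
    (hgrch : ∀ i : ℕ, ∀ p ∈ SP.gr i, ∃ q₁ q₂ : Q,
      p = ι q₁ + ι q₂ * z ∧ q₁ ∈ SQ.gr i ∧
        ((2 * k ≤ i ∧ q₂ ∈ SQ.gr (i - 2 * k)) ∨ q₂ = 0)) :
    IsPDCDGA SP (n : ℤ) := by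
  classical
  obtain ⟨hι1, hιmul, hιgr, hιd⟩ := hι
  obtain ⟨hQconn, hQft, SQm, hQself, DMQ, R, θQ, hθhom, hθbij⟩ := hQPD
  obtain ⟨hQmgr, hQmsmul, hQmd⟩ := hQself
  obtain ⟨hθgr, hθsmul, hθd⟩ := hθhom
  set n' : ℤ := (n : ℤ) - 2 * k with hn'
  have d1Q : SQ.d 1 = 0 := by
    have h := SQ.leibniz (1 : Q) 1 SQ.one_mem
    rw [one_mul] at h
    simp only [pow_zero, one_smul, mul_one, one_mul] at h
    exact (left_eq_add.mp h)
  have hθ1 : θQ 1 ∈ DMQ.str.gr 0 := by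
    apply hθgr 0
    rw [hQmgr]
    exact SQ.s7_mem_grZ SQ.one_mem (by norm_num)
  set εQ : Q →ₗ[ℚ] ℚ := R.pair (θQ 1) with hεQ
  have keyN : ∀ (i : ℕ) (x y : Q), x ∈ SQ.gr i → R.pair (θQ x) y = εQ (x * y) := by
    intro i x y hx
    have h1 : θQ x = DMQ.str.smul x (θQ 1) := by
      rw [← hθsmul x 1, hQmsmul, mul_one]
    have h2 := R.smul_pair x (θQ 1) y hx hθ1
    rw [h1, h2, hQmsmul]
    simp
    rfl
  have keyZ : ∀ (p : ℤ) (x y : Q), x ∈ SQ.grZ p → R.pair (θQ x) y = εQ (x * y) := by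
    intro p x y hx
    by_cases hp : 0 ≤ p
    · rw [SQ.s7_grZ_nonneg hp] at hx
      exact keyN _ x y hx
    · rw [SQ.s7_grZ_eq_zero (by omega) hx]
      simp
  have εQ_supp : ∀ (m : ℤ) (q : Q), q ∈ SQ.grZ m → m ≠ n' → εQ q = 0 := by
    intro m q hq hm
    exact R.pair_deg hθ1 (by rw [hQmgr]; exact hq) (by omega)
  have εQ_d : ∀ q : Q, εQ (SQ.d q) = 0 := by
    intro q
    have hd := R.d_pair (θQ 1) q hθ1
    have hzq : DMQ.str.d (θQ 1) = 0 := by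
      rw [← hθd, hQmd, d1Q, map_zero]
    rw [hzq] at hd
    simp only [map_zero, LinearMap.zero_apply, zpow_zero, one_mul] at hd
    have h0 : R.pair (θQ 1) (SQm.d q) = 0 := by linarith
    rw [hQmd] at h0
    exact h0
  have Qvanish : ∀ (j : ℤ), n' < j → ∀ q ∈ SQ.grZ j, q = 0 := by
    intro j hj q hq
    have hθq : θQ q ∈ DMQ.str.gr j := hθgr j q (by rw [hQmgr]; exact hq)
    have hz0 : θQ q = 0 := by
      apply R.nondeg (θQ q) hθq
      intro x hx
      rw [hQmgr] at hx
      rw [SQ.s7_grZ_eq_zero (by omega) hx, map_zero]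
    exact hθbij.1 (by rw [hz0, map_zero])
  have QnondegZ : ∀ (p : ℤ) (q : Q), q ∈ SQ.grZ p →
      (∀ y ∈ SQ.grZ (n' - p), εQ (q * y) = 0) → q = 0 := by
    intro p q hq hvan
    have hθq : θQ q ∈ DMQ.str.gr p := hθgr p q (by rw [hQmgr]; exact hq)
    have hz0 : θQ q = 0 := by
      apply R.nondeg (θQ q) hθq
      intro x hx
      rw [hQmgr] at hx
      rw [keyZ p q x hq]
      exact hvan x hx
    exact hθbij.1 (by rw [hz0, map_zero])
  have QsurjZ : ∀ (p : ℤ) (φ : Q →ₗ[ℚ] ℚ), ∃ b ∈ SQ.grZ p,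
      ∀ y ∈ SQ.grZ (n' - p), εQ (b * y) = φ y := by
    intro p φ
    obtain ⟨fD, hfD, hfDp⟩ := R.surj p φ
    obtain ⟨b, hb⟩ := hθbij.2 fD
    have hbgr : b ∈ SQ.grZ p := by
      refine s7_homog_of_map_homog SQ.s7_grZ_internal DMQ.str.internal θQ
        (fun j m hm => hθgr j m (by rw [hQmgr]; exact hm)) hθbij.1 ?_
      rw [hb]; exact hfD
    refine ⟨b, hbgr, fun y hy => ?_⟩
    rw [← keyZ p b y hbgr, hb]
    exact hfDp y (by rw [hQmgr]; exact hy)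
  -- the decomposition P ≅ Q ⊕ Q·z
  set D0 : P → Q × Q := fun p => (hfree p).choose with hD0
  have spec : ∀ p : P, p = ι (D0 p).1 + ι (D0 p).2 * z := fun p => (hfree p).choose_spec.1
  have uniq : ∀ (p : P) (qq : Q × Q), p = ι qq.1 + ι qq.2 * z → D0 p = qq :=
    fun p qq h => ((hfree p).choose_spec.2 qq h).symm
  have hD0add : ∀ p p' : P, D0 (p + p') = D0 p + D0 p' := by
    intro p p'
    apply uniq
    rw [Prod.fst_add, Prod.snd_add, map_add, map_add, add_mul]
    conv_lhs => rw [spec p, spec p']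
    abel
  have hD0smul : ∀ (c : ℚ) (p : P), D0 (c • p) = c • D0 p := by
    intro c p
    apply uniq
    rw [Prod.smul_fst, Prod.smul_snd, map_smul, map_smul, smul_mul_assoc]
    conv_lhs => rw [spec p]
    rw [smul_add]
  have hD00 : D0 (0 : P) = 0 := by
    apply uniq
    simp
  have hδι : ∀ q : Q, D0 (ι q) = (q, 0) := by
    intro q
    apply uniq
    simp
  have hδιz : ∀ q : Q, D0 (ι q * z) = (0, q) := by
    intro q
    apply uniq
    simp
  have zcomm : ∀ p : P, z * p = p * z := by
    intro p
    refine s7_graded_induction SP.internal (fun x => z * x = x * z) (by simp)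
      (fun x y hx hy => by
        have hx' : z * x = x * z := hx
        have hy' : z * y = y * z := hy
        show z * (x + y) = (x + y) * z
        rw [mul_add, add_mul, hx', hy']) (fun i x hxi => ?_) p
    show z * x = x * z
    rw [SP.gcomm hz hxi]
    rw [show 2 * k * i = 2 * (k * i) by ring, pow_mul]
    norm_num
  have hmul1 : ∀ q q' : Q, ι q * (ι q' * z) = ι (q * q') * z := by
    intro q q'
    rw [← mul_assoc, ← hιmul]
  have hmul2 : ∀ q q' : Q, (ι q * z) * ι q' = ι (q * q') * z := by
    intro q q'
    rw [mul_assoc, zcomm (ι q'), hmul1]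
  have hmul3 : ∀ q q' : Q, (ι q * z) * (ι q' * z) = ι (q * (q' * e)) * z := by
    intro q q'
    rw [mul_assoc, zcomm (ι q' * z), mul_assoc, hzsq, hmul1, hmul1]
  have δmul : ∀ p p' : P, D0 (p * p') =
      ((D0 p).1 * (D0 p').1,
        (D0 p).1 * (D0 p').2 + (D0 p).2 * (D0 p').1 + (D0 p).2 * ((D0 p').2 * e)) := by
    intro p p'
    apply uniq
    conv_lhs => rw [spec p, spec p']
    rw [add_mul, mul_add, mul_add, ← hιmul, hmul1, hmul2, hmul3]
    rw [map_add, map_add, add_mul, add_mul]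
    abel
  have hιZ : ∀ (j : ℤ) (q : Q), q ∈ SQ.grZ j → ι q ∈ SP.grZ j := by
    intro j q hq
    by_cases hj : 0 ≤ j
    · rw [SQ.s7_grZ_nonneg hj] at hq
      rw [SP.s7_grZ_nonneg hj]
      exact hιgr _ q hq
    · rw [SQ.s7_grZ_eq_zero (by omega) hq, map_zero]
      exact zero_mem _
  have hmulz : ∀ (j : ℤ) (q : Q), q ∈ SQ.grZ j → ι q * z ∈ SP.grZ (j + 2 * k) := by
    intro j q hq
    by_cases hj : 0 ≤ j
    · rw [SQ.s7_grZ_nonneg hj] at hq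
      exact SP.s7_mem_grZ (SP.mul_mem (hιgr _ q hq) hz) (by omega)
    · rw [SQ.s7_grZ_eq_zero (by omega) hq, map_zero, zero_mul]
      exact zero_mem _
  have hmulZZ : ∀ (p q : ℤ) (f x : P), f ∈ SP.grZ p → x ∈ SP.grZ q →
      f * x ∈ SP.grZ (p + q) := by
    intro p q f x hf hx
    by_cases hp : 0 ≤ p
    · by_cases hq : 0 ≤ q
      · rw [SP.s7_grZ_nonneg hp] at hf
        rw [SP.s7_grZ_nonneg hq] at hx
        exact SP.s7_mem_grZ (SP.mul_mem hf hx) (by omega)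
      · rw [SP.s7_grZ_eq_zero (by omega) hx, mul_zero]
        exact zero_mem _
    · rw [SP.s7_grZ_eq_zero (by omega) hf, zero_mul]
      exact zero_mem _
  have hgrd : ∀ (i : ℕ) (p : P), p ∈ SP.gr i →
      (D0 p).1 ∈ SQ.gr i ∧ (D0 p).2 ∈ SQ.grZ ((i : ℤ) - 2 * k) := by
    intro i p hp
    obtain ⟨q1, q2, hpe, hq1, hq2⟩ := hgrch i p hp
    rw [uniq p (q1, q2) hpe]
    refine ⟨hq1, ?_⟩
    rcases hq2 with ⟨hle, hq2⟩ | rfl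
    · exact SQ.s7_mem_grZ hq2 (by omega)
    · exact zero_mem _
  have hgrdZ : ∀ (p : ℤ) (x : P), x ∈ SP.grZ p →
      (D0 x).1 ∈ SQ.grZ p ∧ (D0 x).2 ∈ SQ.grZ (p - 2 * k) := by
    intro p x hx
    by_cases hp : 0 ≤ p
    · rw [SP.s7_grZ_nonneg hp] at hx
      obtain ⟨h1, h2⟩ := hgrd p.toNat x hx
      constructor
      · exact SQ.s7_mem_grZ h1 (by omega)
      · rw [show p - 2 * (k : ℤ) = (p.toNat : ℤ) - 2 * k by omega]
        exact h2
    · rw [SP.s7_grZ_eq_zero (by omega) hx, hD00]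
      exact ⟨zero_mem _, zero_mem _⟩
  -- the orientation of P and the pairing
  set δL : P →ₗ[ℚ] Q × Q :=
    { toFun := D0, map_add' := hD0add,
      map_smul' := fun c p => hD0smul c p } with hδL
  set εP : P →ₗ[ℚ] ℚ := εQ ∘ₗ (LinearMap.snd ℚ Q Q) ∘ₗ δL with hεP
  have εP_apply : ∀ y : P, εP y = εQ ((D0 y).2) := fun y => rfl
  set pairP : P →ₗ[ℚ] P →ₗ[ℚ] ℚ := (LinearMap.mul ℚ P).compr₂ εP with hpairP
  have pairP_apply : ∀ f x : P, pairP f x = εP (f * x) := by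
    intro f x
    rw [hpairP, LinearMap.compr₂_apply, LinearMap.mul_apply']
  have εP_supp : ∀ (m : ℤ) (y : P), y ∈ SP.grZ m → m ≠ (n : ℤ) → εP y = 0 := by
    intro m y hy hm
    obtain ⟨_, h2⟩ := hgrdZ m y hy
    rw [εP_apply]
    exact εQ_supp (m - 2 * k) _ h2 (by omega)
  have εP_d : ∀ p : P, εP (SP.d p) = 0 := by
    refine s7_graded_induction SP.internal (fun x => εP (SP.d x) = 0) (by simp)
      (fun x y hx hy => by
        have hx' : εP (SP.d x) = 0 := hx
        have hy' : εP (SP.d y) = 0 := hy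
        show εP (SP.d (x + y)) = 0
        rw [map_add, map_add, hx', hy', add_zero]) ?_
    intro i x hxi
    show εP (SP.d x) = 0
    obtain ⟨q1, q2, hpe, hq1, hq2⟩ := hgrch i x hxi
    have hdx : SP.d x = ι (SQ.d q1) + ι (SQ.d q2) * z := by
      conv_lhs => rw [hpe]
      rw [map_add, ← hιd]
      congr 1
      rcases hq2 with ⟨hle, hq2m⟩ | rfl
      · rw [SP.leibniz (ι q2) z (hιgr _ q2 hq2m), hdz, mul_zero, smul_zero, add_zero, ← hιd]
      · simp
    rw [hdx, εP_apply, uniq _ (SQ.d q1, SQ.d q2) rfl]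
    exact εQ_d q2
  have Pvanish : ∀ (j : ℤ), (n : ℤ) < j → ∀ x ∈ SP.grZ j, x = 0 := by
    intro j hj x hx
    obtain ⟨h1, h2⟩ := hgrdZ j x hx
    have e1 : (D0 x).1 = 0 := Qvanish j (by omega) _ h1
    have e2 : (D0 x).2 = 0 := Qvanish (j - 2 * k) (by omega) _ h2
    conv_lhs => rw [spec x]
    rw [e1, e2, map_zero, zero_mul, add_zero]
  refine ⟨?_, ?_, SP.s7_selfMod, SP.s7_selfMod_isSelf,
    ⟨P, SP.s7_selfMod⟩, ?_, LinearMap.id,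
    ⟨fun j m hm => hm, fun a m => rfl, fun m => rfl⟩, Function.bijective_id⟩
  · -- Connected
    intro a0 ha0
    obtain ⟨h1, h2⟩ := hgrd 0 a0 ha0
    have hb0 : (D0 a0).2 = 0 := SQ.s7_grZ_eq_zero (by omega) h2
    obtain ⟨q, hq, hqu⟩ := hQconn (D0 a0).1 h1
    have hq2 : (D0 a0).1 = q • 1 := hq
    refine ⟨q, ?_, ?_⟩
    · show a0 = q • (1 : P)
      conv_lhs => rw [spec a0]
      rw [hb0, map_zero, zero_mul, add_zero, hq2, map_smul, hι1]
    · intro q' hq'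
      have hq'' : a0 = q' • (1 : P) := hq'
      have hDa : D0 a0 = (q' • 1, 0) := by
        apply uniq
        rw [hq'', map_smul, hι1]
        simp
      apply hqu
      rw [hDa]
  · -- FiniteType
    intro i
    haveI hfd2 : FiniteDimensional ℚ (SQ.grZ ((i : ℤ) - 2 * k)) := by
      by_cases h : 0 ≤ (i : ℤ) - 2 * k
      · rw [SQ.s7_grZ_nonneg h]; exact hQft _
      · rw [SQ.s7_grZ_neg (by omega)]
        infer_instance
    haveI hfd1 : FiniteDimensional ℚ (SQ.gr i) := hQft i
    let ψ : ↥(SP.gr i) →ₗ[ℚ] (↥(SQ.gr i) × ↥(SQ.grZ ((i : ℤ) - 2 * k))) :=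
      { toFun := fun x => (⟨(D0 x.1).1, (hgrd i x.1 x.2).1⟩, ⟨(D0 x.1).2, (hgrd i x.1 x.2).2⟩)
        map_add' := by
          intro x y
          have h := hD0add x.1 y.1
          refine Prod.ext (Subtype.ext ?_) (Subtype.ext ?_) <;>
            simp [h]
        map_smul' := by
          intro c x
          have h : D0 ((c • x : ↥(SP.gr i)) : P) = c • D0 x.1 := by
            rw [Submodule.coe_smul]
            exact hD0smul c x.1
          refine Prod.ext (Subtype.ext ?_) (Subtype.ext ?_) <;>
            simp [hD0smul] }
    have hinj : Function.Injective ψ := by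
      intro x y hxy
      have h1 : (D0 x.1).1 = (D0 y.1).1 := congrArg (fun w => (w.1 : Q)) hxy
      have h2 : (D0 x.1).2 = (D0 y.1).2 := congrArg (fun w => (w.2 : Q)) hxy
      apply Subtype.ext
      conv_lhs => rw [spec x.1]
      conv_rhs => rw [spec y.1]
      rw [h1, h2]
    exact FiniteDimensional.of_injective ψ hinj
  · -- DualRep
    refine { pair := pairP, pair_deg := ?_, nondeg := ?_, surj := ?_,
             d_pair := ?_, smul_pair := ?_ }
    · intro p q f x hf hx hpq
      rw [pairP_apply]
      exact εP_supp (p + q) (f * x) (hmulZZ p q f x hf hx) hpq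
    · intro p f hf hvan
      obtain ⟨ha, hb⟩ := hgrdZ p f hf
      have hb0 : (D0 f).2 = 0 := by
        apply QnondegZ (p - 2 * k) _ hb
        intro y hy
        rw [show n' - (p - 2 * k) = (n : ℤ) - p by omega] at hy
        have h0 := hvan (ι y) (hιZ _ y hy)
        rw [pairP_apply, εP_apply, δmul, hδι] at h0
        simpa using h0
      have ha0 : (D0 f).1 = 0 := by
        apply QnondegZ p _ ha
        intro y hy
        have hxm : ι y * z ∈ SP.grZ ((n : ℤ) - p) := by
          have h := hmulz _ y hy
          rw [show n' - p + 2 * (k : ℤ) = (n : ℤ) - p by omega] at h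
          exact h
        have h0 := hvan (ι y * z) hxm
        rw [pairP_apply, εP_apply, δmul, hδιz, hb0] at h0
        simpa using h0
      conv_lhs => rw [spec f]
      rw [ha0, hb0, map_zero, zero_mul, add_zero]
    · intro p φ
      obtain ⟨b, hb, hbp⟩ := QsurjZ (p - 2 * k) (φ.comp ι)
      obtain ⟨a, ha, hap⟩ := QsurjZ p
        ((φ.comp ((LinearMap.mulRight ℚ z).comp ι)) -
          (εQ.comp ((LinearMap.mulLeft ℚ b).comp (LinearMap.mulRight ℚ e))))
      refine ⟨ι a + ι b * z, ?_, ?_⟩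
      · have h1 := hιZ p a ha
        have h2 := hmulz _ b hb
        rw [show p - 2 * (k : ℤ) + 2 * k = p by omega] at h2
        exact add_mem h1 h2
      · intro x hx
        have hDf : D0 (ι a + ι b * z) = (a, b) := uniq _ _ rfl
        obtain ⟨hc, hd⟩ := hgrdZ ((n : ℤ) - p) x hx
        rw [pairP_apply, εP_apply, δmul, hDf]
        rw [map_add, map_add]
        have e1 : εQ (a * (D0 x).2) =
            φ (ι (D0 x).2 * z) - εQ (b * ((D0 x).2 * e)) := by
          have hd' : (D0 x).2 ∈ SQ.grZ (n' - p) := by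
            rw [show n' - p = (n : ℤ) - p - 2 * k by omega]
            exact hd
          have h := hap _ hd'
          simpa using h
        have e2 : εQ (b * (D0 x).1) = φ (ι (D0 x).1) := by
          have hc' : (D0 x).1 ∈ SQ.grZ (n' - (p - 2 * k)) := by
            rw [show n' - (p - 2 * k) = (n : ℤ) - p by omega]
            exact hc
          exact hbp _ hc'
        rw [e1, e2]
        conv_rhs => rw [spec x]
        rw [map_add]
        ring
    · intro p f x hf
      by_cases hp : 0 ≤ p
      · have hf' : f ∈ SP.gr p.toNat := by
          rw [← SP.s7_grZ_nonneg hp]; exact hf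
        have h0 := εP_d (f * x)
        rw [SP.leibniz f x hf', map_add, map_smul, smul_eq_mul] at h0
        show pairP (SP.d f) x = -((-1 : ℚ) ^ p * pairP f (SP.d x))
        rw [pairP_apply, pairP_apply]
        rw [show ((-1 : ℚ)) ^ p = ((-1 : ℚ)) ^ p.toNat by
          conv_lhs => rw [show p = ((p.toNat : ℕ) : ℤ) by omega]
          rw [zpow_natCast]]
        linarith
      · rw [SP.s7_grZ_eq_zero (by omega) hf]
        show pairP (SP.d 0) x = -((-1 : ℚ) ^ p * pairP 0 (SP.d x))
        rw [map_zero, map_zero]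
        simp
    · intro i p a f x ha hf
      show pairP (a * f) x = ((-1 : ℚ) ^ ((i : ℤ) * p)) * pairP f (a * x)
      by_cases hp : 0 ≤ p
      · have hf' : f ∈ SP.gr p.toNat := by
          rw [← SP.s7_grZ_nonneg hp]; exact hf
        rw [pairP_apply, pairP_apply]
        rw [show ((-1 : ℚ)) ^ ((i : ℤ) * p) = ((-1 : ℚ)) ^ (p.toNat * i) by
          rw [show (i : ℤ) * p = ((p.toNat * i : ℕ) : ℤ) by push_cast [Int.toNat_of_nonneg hp]; ring, zpow_natCast]]
        rw [← mul_assoc, SP.gcomm hf' ha, smul_mul_assoc, map_smul, smul_eq_mul,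
          ← mul_assoc ((-1 : ℚ) ^ (p.toNat * i)), ← pow_add,
          show ((-1 : ℚ)) ^ (p.toNat * i + p.toNat * i) = 1 from
            Even.neg_one_pow ⟨p.toNat * i, rfl⟩, one_mul]
      · rw [SP.s7_grZ_eq_zero (by omega) hf]
        rw [mul_zero, map_zero]
        simp
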